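/- arXiv:1012.2724 — 3 statements merged into one kernel-verified Lean document; each statement's English description precedes it below -/
import Mathlib

section
/- Let R be a commutative ring, M an R-module, and d, e ≥ 0. The composite of the comultiplication Λ^{d+e}(M) → Λ^d(M) ⊗ Λ^e(M) (the (d,e)-component of the diagonal of the exterior bialgebra, given by a signed sum over (d,e)-shuffles) with the wedge multiplication Λ^d(M) ⊗ Λ^e(M) → Λ^{d+e}(M) equals binomial(d+e, d) times the identity of Λ^{d+e}(M). -/
open scoped TensorProduct

/-- The wedge multiplication `Λ^d(M) ⊗ Λ^e(M) → ExteriorAlgebra R M` (with image inside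
`Λ^{d+e}(M)`), induced by the product of the exterior algebra. -/
noncomputable def wedgeMul (R : Type*) [CommRing R] (M : Type*) [AddCommGroup M] [Module R M]
    (d e : ℕ) : (⋀[R]^d M) ⊗[R] (⋀[R]^e M) →ₗ[R] ExteriorAlgebra R M :=
  TensorProduct.lift ((LinearMap.mul R (ExteriorAlgebra R M)).compl₁₂
    (Submodule.subtype _) (Submodule.subtype _))

lemma wedgeMul_tmul {R : Type*} [CommRing R] {M : Type*} [AddCommGroup M] [Module R M]
    {d e : ℕ} (a : ⋀[R]^d M) (b : ⋀[R]^e M) :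
    wedgeMul R M d e (a ⊗ₜ[R] b) = (a : ExteriorAlgebra R M) * (b : ExteriorAlgebra R M) := by
  simp [wedgeMul]

lemma ιMulti_mul_ιMulti {R : Type*} [CommRing R] {M : Type*} [AddCommGroup M] [Module R M]
    {d e : ℕ} (f : Fin d → M) (g : Fin e → M) :
    (ExteriorAlgebra.ιMulti R d f : ExteriorAlgebra R M) * ExteriorAlgebra.ιMulti R e g =
      ExteriorAlgebra.ιMulti R (d + e) (Fin.append f g) := by
  have h : (fun i => ExteriorAlgebra.ι R (Fin.append f g i)) =
      Fin.append (fun i => ExteriorAlgebra.ι R (f i)) (fun i => ExteriorAlgebra.ι R (g i)) := by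
    funext k
    refine Fin.addCases (fun i => ?_) (fun i => ?_) k
    · simp [Fin.append_left]
    · simp [Fin.append_right]
  rw [ExteriorAlgebra.ιMulti_apply, ExteriorAlgebra.ιMulti_apply, ExteriorAlgebra.ιMulti_apply,
    h, List.ofFn_fin_append, List.prod_append]

/-- The number of `(d,e)`-shuffles is `(d+e).choose d`. -/
lemma card_shuffles (d e : ℕ) :
    (Finset.univ.filter (fun σ : Equiv.Perm (Fin (d + e)) =>
      (∀ i j : Fin d, i < j → σ (Fin.castAdd e i) < σ (Fin.castAdd e j)) ∧
      (∀ i j : Fin e, i < j → σ (Fin.natAdd d i) < σ (Fin.natAdd d j)))).card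
      = (d + e).choose d := by
  classical
  have hcard : (Finset.powersetCard d (Finset.univ : Finset (Fin (d + e)))).card
      = (d + e).choose d := by
    simp [Finset.card_powersetCard]
  rw [← hcard]
  -- facts used repeatedly
  have castAdd_ne_natAdd : ∀ (i : Fin d) (j : Fin e),
      Fin.castAdd e i ≠ Fin.natAdd d j := by
    intro i j h
    have := congrArg Fin.val h
    simp only [Fin.coe_castAdd, Fin.coe_natAdd] at this
    omega
  apply Finset.card_bij
    (fun σ _ => Finset.image (fun i : Fin d => σ (Fin.castAdd e i)) Finset.univ)
  · intro σ hσ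
    rw [Finset.mem_filter] at hσ
    have hmono : StrictMono (fun i : Fin d => σ (Fin.castAdd e i)) :=
      fun i j h => hσ.2.1 i j h
    rw [Finset.mem_powersetCard]
    refine ⟨Finset.subset_univ _, ?_⟩
    rw [Finset.card_image_of_injective _ hmono.injective, Finset.card_univ, Fintype.card_fin]
  · -- injectivity
    intro σ₁ hσ₁ σ₂ hσ₂ himg
    rw [Finset.mem_filter] at hσ₁ hσ₂
    set S := Finset.image (fun i : Fin d => σ₁ (Fin.castAdd e i)) Finset.univ with hSdef
    have hScard : S.card = d := by
      rw [hSdef, Finset.card_image_of_injective _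
        (show StrictMono (fun i : Fin d => σ₁ (Fin.castAdd e i)) from
          fun i j h => hσ₁.2.1 i j h).injective, Finset.card_univ, Fintype.card_fin]
    have hSccard : Sᶜ.card = e := by
      rw [Finset.card_compl, hScard, Fintype.card_fin]; omega
    -- both left parts equal orderEmbOfFin S
    have hleft : ∀ (σ : Equiv.Perm (Fin (d + e))),
        (∀ i j : Fin d, i < j → σ (Fin.castAdd e i) < σ (Fin.castAdd e j)) →
        Finset.image (fun i : Fin d => σ (Fin.castAdd e i)) Finset.univ = S →
        (fun i : Fin d => σ (Fin.castAdd e i)) = S.orderEmbOfFin hScard := by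
      intro σ hmono himg
      refine Finset.orderEmbOfFin_unique hScard (fun i => ?_) (fun i j h => hmono i j h)
      rw [← himg]
      exact Finset.mem_image_of_mem _ (Finset.mem_univ i)
    have h1 := hleft σ₁ hσ₁.2.1 rfl
    have h2 := hleft σ₂ hσ₂.2.1 himg.symm
    have hright : ∀ (σ : Equiv.Perm (Fin (d + e))),
        (∀ i j : Fin e, i < j → σ (Fin.natAdd d i) < σ (Fin.natAdd d j)) →
        (fun i : Fin d => σ (Fin.castAdd e i)) = S.orderEmbOfFin hScard →
        (fun i : Fin e => σ (Fin.natAdd d i)) = Sᶜ.orderEmbOfFin hSccard := by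
      intro σ hmono hl
      refine Finset.orderEmbOfFin_unique hSccard (fun i => ?_) (fun i j h => hmono i j h)
      rw [Finset.mem_compl]
      intro hmem
      -- σ (natAdd d i) ∈ S means it equals σ₁ (castAdd e j) for some j; but S is also
      -- the image of σ's left part since hl determines it.
      have himgσ : Finset.image (fun i : Fin d => σ (Fin.castAdd e i)) Finset.univ = S := by
        apply Finset.coe_injective
        rw [Finset.coe_image, Finset.coe_univ, Set.image_univ]
        have : (fun i : Fin d => σ (Fin.castAdd e i)) = ⇑(S.orderEmbOfFin hScard) := hl
        rw [this, Finset.range_orderEmbOfFin]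
      rw [← himgσ, Finset.mem_image] at hmem
      obtain ⟨j, _, hj⟩ := hmem
      exact castAdd_ne_natAdd j i (σ.injective hj)
    have h1' := hright σ₁ hσ₁.2.2 h1
    have h2' := hright σ₂ hσ₂.2.2 h2
    ext k
    refine Fin.addCases (fun i => ?_) (fun i => ?_) k
    · exact congrArg Fin.val ((congrFun h1 i).trans (congrFun h2 i).symm)
    · exact congrArg Fin.val ((congrFun h1' i).trans (congrFun h2' i).symm)
  · -- surjectivity
    intro S hS
    rw [Finset.mem_powersetCard] at hS
    have hSd : S.card = d := hS.2
    have hSc : Sᶜ.card = e := by rw [Finset.card_compl, hSd, Fintype.card_fin]; omega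
    set f : Fin d ⊕ Fin e → Fin (d + e) :=
      Sum.elim (S.orderEmbOfFin hSd) (Sᶜ.orderEmbOfFin hSc) with hf
    have hinj : Function.Injective f := by
      refine Function.Injective.sumElim (S.orderEmbOfFin hSd).injective
        (Sᶜ.orderEmbOfFin hSc).injective (fun a b h => ?_)
      have h1 := Finset.orderEmbOfFin_mem S hSd a
      have h2 := Finset.orderEmbOfFin_mem Sᶜ hSc b
      rw [h] at h1
      exact (Finset.mem_compl.mp h2) h1
    have hbij : Function.Bijective f :=
      (Fintype.bijective_iff_injective_and_card f).mpr ⟨hinj, by simp⟩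
    set σ : Equiv.Perm (Fin (d + e)) := finSumFinEquiv.symm.trans (Equiv.ofBijective f hbij)
      with hσdef
    have hσcast : ∀ i : Fin d, σ (Fin.castAdd e i) = S.orderEmbOfFin hSd i := by
      intro i
      simp [hσdef, Equiv.trans_apply, finSumFinEquiv_symm_apply_castAdd,
        Equiv.ofBijective_apply, hf]
    have hσnat : ∀ i : Fin e, σ (Fin.natAdd d i) = Sᶜ.orderEmbOfFin hSc i := by
      intro i
      simp [hσdef, Equiv.trans_apply, finSumFinEquiv_symm_apply_natAdd,
        Equiv.ofBijective_apply, hf]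
    refine ⟨σ, ?_, ?_⟩
    · rw [Finset.mem_filter]
      refine ⟨Finset.mem_univ _, fun i j h => ?_, fun i j h => ?_⟩
      · rw [hσcast i, hσcast j]
        exact (S.orderEmbOfFin hSd).strictMono h
      · rw [hσnat i, hσnat j]
        exact (Sᶜ.orderEmbOfFin hSc).strictMono h
    · apply Finset.coe_injective
      rw [Finset.coe_image, Finset.coe_univ, Set.image_univ]
      have : (fun i : Fin d => σ (Fin.castAdd e i)) = ⇑(S.orderEmbOfFin hSd) :=
        funext hσcast
      rw [this, Finset.range_orderEmbOfFin]

/-- Let `R` be a commutative ring, `M` an `R`-module, `d, e ≥ 0`.  The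
composite of the comultiplication `Λ^{d+e}(M) → Λ^d(M) ⊗ Λ^e(M)` (the signed sum over
`(d,e)`-shuffles) with the wedge multiplication `Λ^d(M) ⊗ Λ^e(M) → Λ^{d+e}(M)` equals
`(d+e choose d)` times the identity of `Λ^{d+e}(M)`. -/
theorem extPow_mul_comp_comul {R : Type*} [CommRing R] {M : Type*} [AddCommGroup M]
    [Module R M] (d e : ℕ)
    (comul : (⋀[R]^(d + e) M) →ₗ[R] (⋀[R]^d M) ⊗[R] (⋀[R]^e M))
    (hcomul : ∀ v : Fin (d + e) → M,
      comul ⟨ExteriorAlgebra.ιMulti R (d + e) v,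
          ExteriorAlgebra.ιMulti_range R (d + e) (Set.mem_range_self v)⟩ =
        ∑ σ ∈ Finset.univ.filter (fun σ : Equiv.Perm (Fin (d + e)) =>
            (∀ i j : Fin d, i < j → σ (Fin.castAdd e i) < σ (Fin.castAdd e j)) ∧
            (∀ i j : Fin e, i < j → σ (Fin.natAdd d i) < σ (Fin.natAdd d j))),
          ((Equiv.Perm.sign σ : ℤ) •
            ((⟨ExteriorAlgebra.ιMulti R d (fun i => v (σ (Fin.castAdd e i))),
                ExteriorAlgebra.ιMulti_range R d (Set.mem_range_self _)⟩ : ⋀[R]^d M) ⊗ₜ[R]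
             (⟨ExteriorAlgebra.ιMulti R e (fun i => v (σ (Fin.natAdd d i))),
                ExteriorAlgebra.ιMulti_range R e (Set.mem_range_self _)⟩ : ⋀[R]^e M)))) :
    ∀ x : ⋀[R]^(d + e) M,
      wedgeMul R M d e (comul x) = ((d + e).choose d) • (x : ExteriorAlgebra R M) := by
  classical
  -- key computation on generators
  have key : ∀ v : Fin (d + e) → M,
      wedgeMul R M d e (comul ⟨ExteriorAlgebra.ιMulti R (d + e) v,
          ExteriorAlgebra.ιMulti_range R (d + e) (Set.mem_range_self v)⟩) =
        ((d + e).choose d) • ExteriorAlgebra.ιMulti R (d + e) v := by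
    intro v
    rw [hcomul v, map_sum]
    rw [Finset.sum_congr rfl (fun σ hσ => ?_)]
    · rw [Finset.sum_const, card_shuffles]
    · rw [map_zsmul, wedgeMul_tmul]
      dsimp only
      rw [ιMulti_mul_ιMulti]
      have happ : Fin.append (fun i => v (σ (Fin.castAdd e i)))
          (fun i => v (σ (Fin.natAdd d i))) = v ∘ σ := by
        funext k
        refine Fin.addCases (fun i => ?_) (fun i => ?_) k
        · simp [Fin.append_left]
        · simp [Fin.append_right]
      rw [happ, AlternatingMap.map_perm]
      rcases Int.units_eq_one_or (Equiv.Perm.sign σ) with h | h <;> simp [h]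
  -- extend to all x by linearity
  intro x
  have hx : (x : ExteriorAlgebra R M) ∈
      Submodule.span R (Set.range (ExteriorAlgebra.ιMulti R (d + e) (M := M))) := by
    rw [ExteriorAlgebra.ιMulti_span_fixedDegree]
    exact x.2
  have main : ∀ (y : ExteriorAlgebra R M)
      (_ : y ∈ Submodule.span R (Set.range (ExteriorAlgebra.ιMulti R (d + e) (M := M))))
      (hy' : y ∈ ⋀[R]^(d + e) M),
      wedgeMul R M d e (comul ⟨y, hy'⟩) = ((d + e).choose d) • y := by
    intro y hy
    induction hy using Submodule.span_induction with
    | mem z hz =>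
      intro hz'
      obtain ⟨v, rfl⟩ := hz
      exact key v
    | zero =>
      intro h0
      have : (⟨0, h0⟩ : ⋀[R]^(d + e) M) = 0 := rfl
      rw [this, map_zero, map_zero, smul_zero]
    | add a b ha hb iha ihb =>
      intro hab
      have ha' : a ∈ ⋀[R]^(d + e) M := by
        rw [← ExteriorAlgebra.ιMulti_span_fixedDegree]; exact ha
      have hb' : b ∈ ⋀[R]^(d + e) M := by
        rw [← ExteriorAlgebra.ιMulti_span_fixedDegree]; exact hb
      have : (⟨a + b, hab⟩ : ⋀[R]^(d + e) M) = ⟨a, ha'⟩ + ⟨b, hb'⟩ := rfl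
      rw [this, map_add, map_add, iha ha', ihb hb', smul_add]
    | smul r a ha iha =>
      intro hra
      have ha' : a ∈ ⋀[R]^(d + e) M := by
        rw [← ExteriorAlgebra.ιMulti_span_fixedDegree]; exact ha
      have : (⟨r • a, hra⟩ : ⋀[R]^(d + e) M) = r • ⟨a, ha'⟩ := rfl
      rw [this, map_smul, map_smul, iha ha', smul_comm]
  have := main x hx x.2
  simpa using this
end

section
/- Let R be a commutative ring and V, W finitely generated projective (or free) R-modules. For every d ≥ 0, the canonical map Γ^d(Hom_R(V,W)) → Hom_R(V^{⊗d}, W^{⊗d})^{Σ_d}, induced by the isomorphism Hom_R(V,W)^{⊗d} ≅ Hom_R(V^{⊗d}, W^{⊗d}), is an isomorphism of R-modules. In other words, Σ_d-equivariant maps V^{⊗d} → W^{⊗d} are classified by the d-th divided power of Hom_R(V,W). -/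
open PiTensorProduct
open scoped TensorProduct

/-- The `n`-th divided power `Γ^n(M) = (M^{⊗n})^{Σ_n}`: the submodule of symmetric tensors. -/
noncomputable def DivPow (R : Type*) [CommRing R] (M : Type*) [AddCommGroup M] [Module R M]
    (n : ℕ) : Submodule R (⨂[R] (_ : Fin n), M) :=
  ⨅ σ : Equiv.Perm (Fin n),
    LinearMap.ker ((PiTensorProduct.reindex R (fun _ => M) σ).toLinearMap - LinearMap.id)

section Aux

variable {R : Type*} [CommRing R]

/-- Split off the last tensor factor of a `d+1`-fold tensor power. -/
noncomputable def splitPT (R : Type*) [CommRing R] (M : Type*) [AddCommGroup M] [Module R M]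
    (d : ℕ) : (⨂[R] (_ : Fin (d + 1)), M) ≃ₗ[R] (⨂[R] (_ : Fin d), M) ⊗[R] M :=
  (PiTensorProduct.reindex R (fun _ => M) finSumFinEquiv.symm) ≪≫ₗ
    (PiTensorProduct.tmulEquiv R M).symm ≪≫ₗ
    TensorProduct.congr (LinearEquiv.refl R _) (PiTensorProduct.subsingletonEquiv (0 : Fin 1))

lemma splitPT_tprod {M : Type*} [AddCommGroup M] [Module R M] (d : ℕ) (v : Fin (d + 1) → M) :
    splitPT R M d (tprod R v) =
      (tprod R fun i : Fin d => v (finSumFinEquiv (Sum.inl i))) ⊗ₜ[R]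
        v (finSumFinEquiv (Sum.inr 0)) := by
  simp [splitPT]

lemma pt_free {M : Type*} [AddCommGroup M] [Module R M] [Module.Free R M] (d : ℕ) :
    Module.Free R (⨂[R] (_ : Fin d), M) := by
  induction d with
  | zero => exact Module.Free.of_equiv (PiTensorProduct.isEmptyEquiv (Fin 0)).symm
  | succ d ih =>
    haveI := ih
    exact Module.Free.of_equiv (splitPT R M d).symm

lemma pt_finite {M : Type*} [AddCommGroup M] [Module R M] [Module.Free R M] [Module.Finite R M]
    (d : ℕ) : Module.Finite R (⨂[R] (_ : Fin d), M) := by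
  induction d with
  | zero => exact Module.Finite.equiv (PiTensorProduct.isEmptyEquiv (Fin 0)).symm
  | succ d ih =>
    haveI := ih
    haveI := pt_free (R := R) (M := M) d
    exact Module.Finite.equiv (splitPT R M d).symm

lemma pt_empty_eq {N : Type*} [AddCommGroup N] [Module R N] (x : ⨂[R] (_ : Fin 0), N) :
    x = isEmptyEquiv (Fin 0) x • tprod R (isEmptyElim : Fin 0 → N) := by
  conv_lhs => rw [← (isEmptyEquiv (Fin 0)).symm_apply_apply x]
  rw [isEmptyEquiv_symm_apply]

variable {V W : Type*} [AddCommGroup V] [Module R V] [AddCommGroup W] [Module R W]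

lemma phi_reindex (d : ℕ) (σ : Equiv.Perm (Fin d)) (x : ⨂[R] (_ : Fin d), V →ₗ[R] W) :
    (piTensorHomMap (PiTensorProduct.reindex R (fun _ => V →ₗ[R] W) σ x)).comp
        (PiTensorProduct.reindex R (fun _ : Fin d => V) σ).toLinearMap =
      (PiTensorProduct.reindex R (fun _ : Fin d => W) σ).toLinearMap.comp
        (piTensorHomMap x) := by
  induction x using PiTensorProduct.induction_on with
  | smul_tprod r f =>
    ext v
    simp
  | add x y hx hy =>
    simp only [map_add, LinearMap.add_comp, LinearMap.comp_add, hx, hy]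

lemma phi_apply_empty (x : ⨂[R] (_ : Fin 0), V →ₗ[R] W) :
    piTensorHomMap x (tprod R (isEmptyElim : Fin 0 → V)) =
      isEmptyEquiv (Fin 0) x • tprod R (isEmptyElim : Fin 0 → W) := by
  induction x using PiTensorProduct.induction_on with
  | smul_tprod r f =>
    simp only [map_smul, LinearMap.smul_apply, piTensorHomMap_tprod_tprod,
      isEmptyEquiv_apply_tprod, smul_eq_mul, mul_one]
    congr 1
    exact congrArg (⇑(PiTensorProduct.tprod R)) (funext fun i => i.elim0)
  | add x y hx hy => simp [hx, hy, add_smul]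

lemma phi_bij_zero : Function.Bijective
    (piTensorHomMap (R := R) (s := fun _ : Fin 0 => V) (t := fun _ : Fin 0 => W)) := by
  have key : ∀ x : ⨂[R] (_ : Fin 0), V →ₗ[R] W,
      x = isEmptyEquiv (Fin 0) x • tprod R (isEmptyElim : Fin 0 → V →ₗ[R] W) :=
    fun x => pt_empty_eq x
  constructor
  · intro x y h
    have h2 := congrArg (fun f : (⨂[R] (_ : Fin 0), V) →ₗ[R] ⨂[R] (_ : Fin 0), W =>
      isEmptyEquiv (Fin 0) (f (tprod R (isEmptyElim : Fin 0 → V)))) h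
    simp only [phi_apply_empty, map_smul, isEmptyEquiv_apply_tprod, smul_eq_mul, mul_one] at h2
    rw [key x, key y, h2]
  · intro f
    refine ⟨isEmptyEquiv (Fin 0) (f (tprod R (isEmptyElim : Fin 0 → V))) •
      tprod R (isEmptyElim : Fin 0 → V →ₗ[R] W), ?_⟩
    ext v
    have hv : v = (isEmptyElim : Fin 0 → V) := funext fun i => i.elim0
    subst hv
    rw [map_smul]
    simp only [LinearMap.compMultilinearMap_apply, LinearMap.smul_apply,
      piTensorHomMap_tprod_tprod]
    conv_rhs => rw [pt_empty_eq (f ((PiTensorProduct.tprod R) fun _ => isEmptyElim _))]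
    congr 1
    exact congrArg (⇑(PiTensorProduct.tprod R)) (funext fun i => i.elim0)

lemma phi_succ (d : ℕ) :
    (piTensorHomMap (R := R) (s := fun _ : Fin (d + 1) => V) (t := fun _ => W)) =
      (LinearEquiv.arrowCongr (splitPT R V d) (splitPT R W d)).symm.toLinearMap ∘ₗ
        (TensorProduct.homTensorHomMap (RingHom.id R) (⨂[R] (_ : Fin d), V) V (⨂[R] (_ : Fin d), W) W) ∘ₗ
          (LinearMap.rTensor (V →ₗ[R] W)
            (piTensorHomMap (R := R) (s := fun _ : Fin d => V) (t := fun _ => W))) ∘ₗ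
            (splitPT R (V →ₗ[R] W) d).toLinearMap := by
  ext f v
  apply (splitPT R W d).injective
  simp only [LinearMap.compMultilinearMap_apply, LinearMap.coe_comp, Function.comp_apply,
    LinearEquiv.coe_coe, splitPT_tprod, LinearMap.rTensor_tmul,
    TensorProduct.homTensorHomMap_apply, LinearEquiv.arrowCongr_symm_apply,
    piTensorHomMap_tprod_tprod]
  rw [LinearEquiv.apply_symm_apply]
  simp only [TensorProduct.map_tmul, piTensorHomMap_tprod_tprod]

lemma phi_bij [Module.Free R V] [Module.Finite R V] (d : ℕ) :
    Function.Bijective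
      (piTensorHomMap (R := R) (s := fun _ : Fin d => V) (t := fun _ : Fin d => W)) := by
  induction d with
  | zero => exact phi_bij_zero
  | succ d ih =>
    haveI := pt_free (R := R) (M := V) d
    haveI := pt_finite (R := R) (M := V) d
    rw [phi_succ]
    have h1 : Function.Bijective
        ⇑(TensorProduct.homTensorHomMap (RingHom.id R) (⨂[R] (_ : Fin d), V) V (⨂[R] (_ : Fin d), W) W) := by
      rw [← homTensorHomEquiv_toLinearMap]
      exact (homTensorHomEquiv R _ _ _ _).bijective
    have h2 : Function.Bijective
        ⇑(LinearMap.rTensor (V →ₗ[R] W)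
          (piTensorHomMap (R := R) (s := fun _ : Fin d => V) (t := fun _ => W))) := by
      have heq : LinearMap.rTensor (V →ₗ[R] W)
            (piTensorHomMap (R := R) (s := fun _ : Fin d => V) (t := fun _ => W)) =
          (TensorProduct.congr (LinearEquiv.ofBijective _ ih)
            (LinearEquiv.refl R (V →ₗ[R] W))).toLinearMap := by
        apply TensorProduct.ext'
        intro x y
        simp [LinearEquiv.ofBijective]
      rw [heq]
      exact (TensorProduct.congr _ _).bijective
    simp only [LinearMap.coe_comp, LinearEquiv.coe_coe]
    exact ((((LinearEquiv.arrowCongr (splitPT R V d) (splitPT R W d)).symm.bijective).comp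
      h1).comp h2).comp (splitPT R (V →ₗ[R] W) d).bijective

end Aux

/-- Let `R` be a commutative ring and `V`, `W` finitely generated free
`R`-modules.  For every `d ≥ 0`, the canonical map
`Γ^d(Hom_R(V,W)) → Hom_R(V^{⊗d}, W^{⊗d})^{Σ_d}` induced by
`Hom_R(V,W)^{⊗d} → Hom_R(V^{⊗d}, W^{⊗d})` is a bijection onto the set of `Σ_d`-equivariant
maps: it maps symmetric tensors to equivariant maps, injectively and surjectively. -/
theorem divPow_hom_equiv_equivariant {R : Type*} [CommRing R] {V W : Type*}
    [AddCommGroup V] [Module R V] [AddCommGroup W] [Module R W]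
    [Module.Free R V] [Module.Finite R V] [Module.Free R W] [Module.Finite R W] (d : ℕ) :
    Set.BijOn
      (⇑(PiTensorProduct.piTensorHomMap (R := R) (s := fun _ : Fin d => V)
        (t := fun _ : Fin d => W)))
      (DivPow R (V →ₗ[R] W) d : Set (⨂[R] (_ : Fin d), V →ₗ[R] W))
      {f : (⨂[R] (_ : Fin d), V) →ₗ[R] ⨂[R] (_ : Fin d), W |
        ∀ σ : Equiv.Perm (Fin d),
          f.comp (PiTensorProduct.reindex R (fun _ : Fin d => V) σ).toLinearMap =
            (PiTensorProduct.reindex R (fun _ : Fin d => W) σ).toLinearMap.comp f} := by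
  have hb := phi_bij (R := R) (V := V) (W := W) d
  have mem_iff : ∀ x : ⨂[R] (_ : Fin d), V →ₗ[R] W,
      x ∈ DivPow R (V →ₗ[R] W) d ↔ ∀ σ : Equiv.Perm (Fin d),
        PiTensorProduct.reindex R (fun _ => V →ₗ[R] W) σ x = x := by
    intro x
    simp [DivPow, Submodule.mem_iInf, LinearMap.mem_ker, LinearMap.sub_apply, sub_eq_zero]
  refine ⟨?_, ?_, ?_⟩
  · intro x hx
    simp only [Set.mem_setOf_eq]
    intro σ
    have h := phi_reindex d σ x
    rw [(mem_iff x).1 hx σ] at h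
    exact h
  · intro x _ y _ hxy
    exact hb.injective hxy
  · intro f hf
    obtain ⟨x, rfl⟩ := hb.surjective f
    refine ⟨x, ?_, rfl⟩
    rw [SetLike.mem_coe, mem_iff]
    intro σ
    apply hb.injective
    have h1 := phi_reindex d σ x
    have h2 := hf σ
    have h3 : (piTensorHomMap (PiTensorProduct.reindex R (fun _ => V →ₗ[R] W) σ x)).comp
          (PiTensorProduct.reindex R (fun _ : Fin d => V) σ).toLinearMap =
        (piTensorHomMap x).comp
          (PiTensorProduct.reindex R (fun _ : Fin d => V) σ).toLinearMap :=
      h1.trans h2.symm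
    apply LinearMap.ext
    intro v
    have h4 := LinearMap.congr_fun h3 ((PiTensorProduct.reindex R (fun _ : Fin d => V) σ).symm v)
    simpa only [LinearMap.coe_comp, Function.comp_apply, LinearEquiv.coe_coe,
      LinearEquiv.apply_symm_apply] using h4
end

section
/- Let k be a commutative ring, A a weighted graded k-algebra, and α an integer. Define the regraded algebra R_α A by shifting the degree of each homogeneous element x of weight w(x) to |x| + α·w(x) (keeping weights), with product s^{αw(x)}x · s^{αw(y)}y = (−1)^{α|x|w(y)} s^{αw(x)+αw(y)}(xy). Then R_α A is an associative weighted graded algebra, and: (a) if α is even, R_{−α}(R_α A) = A; (b) if α is odd, R_{−α}(R_α A) = ^t A, the weight-twisted algebra whose product is x·^t y = (−1)^{w(x)w(y)} xy. -/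
/-- The sign `(−1)^z` for an integer exponent `z`. -/
def esign (z : ℤ) : ℤ := (((-1 : ℤˣ) ^ z : ℤˣ) : ℤ)

lemma esign_add (a b : ℤ) : esign (a + b) = esign a * esign b := by
  simp [esign, zpow_add]

lemma esign_even {z : ℤ} (h : Even z) : esign z = 1 := by
  obtain ⟨m, rfl⟩ := h
  have : ((-1 : ℤˣ) ^ (m + m) : ℤˣ) = 1 := by
    rw [zpow_add]
    exact Int.units_mul_self _
  simp [esign, this]

lemma esign_congr {a b : ℤ} (h : Even (a - b)) : esign a = esign b := by
  have : a = b + (a - b) := by ring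
  rw [this, esign_add, esign_even h, mul_one]

lemma esign_smul_smul {A : Type*} [AddCommGroup A] (s t : ℤ) (x : A) :
    esign s • esign t • x = esign (s + t) • x := by
  rw [smul_smul, ← esign_add]

/-- Let `A` be a weighted graded `k`-algebra (degree in `ℤ`, weight in `ℕ`)
and `α : ℤ`.  The regraded algebra `R_α A` has the same underlying module, each homogeneous
element of degree `i` and weight `d` placed in degree `i + α·d`, and product
`x ·_α y = (−1)^{α·|x|·w(y)} x·y` on homogeneous elements.  Then `R_α A` is an associative
weighted graded algebra, and: (a) if `α` is even, `R_{−α}(R_α A) = A`; (b) if `α` is odd,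
`R_{−α}(R_α A) = ^tA`, the weight-twisted algebra with product `x ·^t y = (−1)^{w(x)w(y)} xy`.
Here `mulα` is the product of `R_α A` and `P` is the product of `R_{−α}(R_α A)`, both
specified on homogeneous elements. -/
theorem regrading_assoc_and_involutive {k A : Type*} [CommRing k] [Ring A] [Algebra k A]
    (𝒜 : ℤ × ℕ → Submodule k A) [GradedAlgebra 𝒜] (α : ℤ)
    (mulα : A →ₗ[k] A →ₗ[k] A)
    (hmulα : ∀ (i j : ℤ) (d e : ℕ), ∀ a ∈ 𝒜 (i, d), ∀ a' ∈ 𝒜 (j, e),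
      mulα a a' = esign (α * i * (e : ℤ)) • (a * a'))
    (P : A →ₗ[k] A →ₗ[k] A)
    (hP : ∀ (i j : ℤ) (d e : ℕ), ∀ a ∈ 𝒜 (i, d), ∀ a' ∈ 𝒜 (j, e),
      P a a' = esign ((-α) * (i + α * (d : ℤ)) * (e : ℤ)) • mulα a a') :
    (∀ x y z : A, mulα (mulα x y) z = mulα x (mulα y z)) ∧
    (∀ (i j : ℤ) (d e : ℕ), ∀ a ∈ 𝒜 (i, d), ∀ a' ∈ 𝒜 (j, e),
      mulα a a' ∈ 𝒜 (i + j, d + e)) ∧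
    (Even α → ∀ x y : A, P x y = x * y) ∧
    (Odd α → ∀ (i j : ℤ) (d e : ℕ), ∀ a ∈ 𝒜 (i, d), ∀ a' ∈ 𝒜 (j, e),
      P a a' = esign ((d * e : ℕ) : ℤ) • (a * a')) := by
  have hgrade : ∀ (i j : ℤ) (d e : ℕ), ∀ a ∈ 𝒜 (i, d), ∀ a' ∈ 𝒜 (j, e),
      mulα a a' ∈ 𝒜 (i + j, d + e) := by
    intro i j d e a ha a' ha'
    rw [hmulα i j d e a ha a' ha']
    exact zsmul_mem (SetLike.mul_mem_graded ha ha') _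
  refine ⟨?_, hgrade, ?_, ?_⟩
  · -- associativity
    intro x y z
    induction x using DirectSum.Decomposition.inductionOn 𝒜 with
    | zero => simp
    | add x x' hx hx' => simp [map_add, LinearMap.add_apply, hx, hx']
    | @homogeneous p m =>
      obtain ⟨i, d⟩ := p
      obtain ⟨a, ha⟩ := m
      induction y using DirectSum.Decomposition.inductionOn 𝒜 with
      | zero => simp
      | add y y' hy hy' => simp [map_add, LinearMap.add_apply, hy, hy']
      | @homogeneous p m =>
        obtain ⟨j, e⟩ := p
        obtain ⟨b, hb⟩ := m
        induction z using DirectSum.Decomposition.inductionOn 𝒜 with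
        | zero => simp
        | add z z' hz hz' => simp [map_add, hz, hz']
        | @homogeneous p m =>
          obtain ⟨l, f⟩ := p
          obtain ⟨c, hc⟩ := m
          simp only
          rw [hmulα i j d e a ha b hb, hmulα j l e f b hb c hc,
            map_zsmul, LinearMap.smul_apply, map_zsmul,
            hmulα (i + j) l (d + e) f _ (SetLike.mul_mem_graded ha hb) c hc,
            hmulα i (j + l) d (e + f) a ha _ (SetLike.mul_mem_graded hb hc),
            esign_smul_smul, esign_smul_smul, mul_assoc a b c]
          congr 1
          apply esign_congr
          push_cast
          ring_nf
          exact Even.zero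
  · -- even case
    intro hα x y
    induction x using DirectSum.Decomposition.inductionOn 𝒜 with
    | zero => simp
    | add x x' hx hx' => simp [map_add, LinearMap.add_apply, hx, hx', add_mul]
    | @homogeneous p m =>
      obtain ⟨i, d⟩ := p
      obtain ⟨a, ha⟩ := m
      induction y using DirectSum.Decomposition.inductionOn 𝒜 with
      | zero => simp
      | add y y' hy hy' => simp [map_add, hy, hy', mul_add]
      | @homogeneous p m =>
        obtain ⟨j, e⟩ := p
        obtain ⟨b, hb⟩ := m
        simp only
        rw [hP i j d e a ha b hb, hmulα i j d e a ha b hb, esign_smul_smul]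
        have : Even (-α * (i + α * (d : ℤ)) * (e : ℤ) + α * i * (e : ℤ)) := by
          obtain ⟨m, rfl⟩ := hα
          exact ⟨-(m * ((m + m) * d * e)), by ring⟩
        rw [esign_even this, one_smul]
  · -- odd case
    intro hα i j d e a ha b hb
    rw [hP i j d e a ha b hb, hmulα i j d e a ha b hb, esign_smul_smul]
    congr 1
    apply esign_congr
    obtain ⟨m, rfl⟩ := hα
    refine ⟨-((2 * m * m + 2 * m + 1) * d * e), ?_⟩
    push_cast
    ring
end
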